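/- Let V₁,...,V_M be random variables such that √n·V_j is N(0, σ²·‖f_j‖_n²)-distributed for each j, where ‖f_j‖_n > 0. Let r_n = 2√2·σ·√((log M + log n)/n) and r_{n,j} = r_n·‖f_j‖_n. Then P(∃ j ≤ M : 2|V_j| > r_{n,j}) ≤ 1/(n·√(π·(log M + log n))), for all integers n ≥ 1 and M ≥ 2. -/

import Mathlib

open MeasureTheory ProbabilityTheory Set
open scoped NNReal ENNReal

lemma aux_integral_mul_exp {b : ℝ} (hb : 0 < b) (a : ℝ) :
    ∫ x in Set.Ioi a, x * Real.exp (-b * x ^ 2) = Real.exp (-b * a ^ 2) / (2 * b) := by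
  have hderiv : ∀ x ∈ Set.Ici a,
      HasDerivAt (fun y => -Real.exp (-b * y ^ 2) / (2 * b)) (x * Real.exp (-b * x ^ 2)) x := by
    intro x _
    have h1 : HasDerivAt (fun y : ℝ => -b * y ^ 2) (-b * (2 * x)) x := by
      simpa using (hasDerivAt_pow 2 x).const_mul (-b)
    have h3 := (h1.exp.neg.div_const (2 * b))
    refine h3.congr_deriv ?_
    rw [div_eq_iff (by positivity)]
    ring
  have hinner : Filter.Tendsto (fun x : ℝ => -b * x ^ 2) Filter.atTop Filter.atBot := by
    have h := (Filter.tendsto_pow_atTop (two_ne_zero)).const_mul_atTop hb (f := fun x : ℝ => x ^ 2)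
    have := Filter.tendsto_neg_atTop_atBot.comp h
    simpa only [Function.comp_def, neg_mul] using this
  have htend : Filter.Tendsto (fun x : ℝ => -Real.exp (-b * x ^ 2) / (2 * b))
      Filter.atTop (nhds 0) := by
    have := ((Real.tendsto_exp_atBot.comp hinner).neg.div_const (2 * b))
    simpa using this
  have key := MeasureTheory.integral_Ioi_of_hasDerivAt_of_tendsto' hderiv
      ((integrable_mul_exp_neg_mul_sq hb).integrableOn) htend
  rw [key]
  field_simp
  ring

lemma aux_gauss_tail_Ioi {v : ℝ≥0} (hv : v ≠ 0) {a : ℝ} (ha : 0 < a) :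
    (gaussianReal 0 v (Set.Ioi a)).toReal
      ≤ (Real.sqrt (2 * Real.pi * v))⁻¹ * ((v : ℝ) / a) * Real.exp (-a ^ 2 / (2 * v)) := by
  have hv' : (0 : ℝ) < v := by positivity
  set b : ℝ := (2 * (v : ℝ))⁻¹ with hbdef
  have hb : 0 < b := by positivity
  rw [gaussianReal_apply_eq_integral 0 hv,
    ENNReal.toReal_ofReal (setIntegral_nonneg measurableSet_Ioi fun x _ =>
      gaussianPDFReal_nonneg _ _ _)]
  have hpdf : ∀ x : ℝ, gaussianPDFReal 0 v x
      = (Real.sqrt (2 * Real.pi * v))⁻¹ * Real.exp (-b * x ^ 2) := by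
    intro x
    rw [gaussianPDFReal, sub_zero, hbdef, neg_mul, inv_mul_eq_div, neg_div,
      inv_mul_eq_div (2 * (v : ℝ)) (x ^ 2), div_eq_inv_mul (Real.exp _)]
  have key : ∀ x ∈ Set.Ioi a, gaussianPDFReal 0 v x
      ≤ (Real.sqrt (2 * Real.pi * v))⁻¹ * a⁻¹ * (x * Real.exp (-b * x ^ 2)) := by
    intro x hx
    rw [hpdf]
    have hxa : 1 ≤ x / a := (one_le_div ha).2 (le_of_lt hx)
    have h1 : Real.exp (-b * x ^ 2) ≤ (x / a) * Real.exp (-b * x ^ 2) := by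
      nlinarith [Real.exp_pos (-b * x ^ 2)]
    calc (Real.sqrt (2 * Real.pi * v))⁻¹ * Real.exp (-b * x ^ 2)
        ≤ (Real.sqrt (2 * Real.pi * v))⁻¹ * ((x / a) * Real.exp (-b * x ^ 2)) := by
          apply mul_le_mul_of_nonneg_left h1 (by positivity)
      _ = (Real.sqrt (2 * Real.pi * v))⁻¹ * a⁻¹ * (x * Real.exp (-b * x ^ 2)) := by ring
  have hint1 : IntegrableOn (gaussianPDFReal 0 v) (Set.Ioi a) :=
    (integrable_gaussianPDFReal 0 v).integrableOn
  have hint2 : IntegrableOn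
      (fun x => (Real.sqrt (2 * Real.pi * v))⁻¹ * a⁻¹ * (x * Real.exp (-b * x ^ 2)))
      (Set.Ioi a) :=
    ((integrable_mul_exp_neg_mul_sq hb).integrableOn).const_mul _
  calc ∫ x in Set.Ioi a, gaussianPDFReal 0 v x
      ≤ ∫ x in Set.Ioi a,
          (Real.sqrt (2 * Real.pi * v))⁻¹ * a⁻¹ * (x * Real.exp (-b * x ^ 2)) :=
        setIntegral_mono_on hint1 hint2 measurableSet_Ioi key
    _ = (Real.sqrt (2 * Real.pi * v))⁻¹ * a⁻¹ * ∫ x in Set.Ioi a, x * Real.exp (-b * x ^ 2) :=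
        integral_const_mul _ _
    _ = (Real.sqrt (2 * Real.pi * v))⁻¹ * a⁻¹ * (Real.exp (-b * a ^ 2) / (2 * b)) := by
        rw [aux_integral_mul_exp hb]
    _ = (Real.sqrt (2 * Real.pi * v))⁻¹ * ((v : ℝ) / a) * Real.exp (-a ^ 2 / (2 * v)) := by
        rw [hbdef]
        have : -(2 * (v : ℝ))⁻¹ * a ^ 2 = -a ^ 2 / (2 * v) := by field_simp
        rw [this]
        field_simp

lemma aux_gauss_neg_tail {v : ℝ≥0} (hv : v ≠ 0) (a : ℝ) :
    gaussianReal 0 v (Set.Iio (-a)) = gaussianReal 0 v (Set.Ioi a) := by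
  have hmap := gaussianReal_map_const_mul (μ := 0) (v := v) (-1)
  have h1 : ∀ h, NNReal.mk ((-1 : ℝ) ^ 2) h = 1 := by intro h; ext; norm_num
  rw [h1 _, mul_zero, one_mul] at hmap
  have hpre : (fun x : ℝ => (-1 : ℝ) * x) ⁻¹' Set.Ioi a = Set.Iio (-a) := by
    ext x
    simp [lt_neg]
  rw [← hpre, ← Measure.map_apply (measurable_const_mul _) measurableSet_Ioi, hmap]

lemma aux_gauss_tail_abs {v : ℝ≥0} (hv : v ≠ 0) {a : ℝ} (ha : 0 < a) :
    (gaussianReal 0 v {x | a < |x|}).toReal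
      ≤ 2 * ((Real.sqrt (2 * Real.pi * v))⁻¹ * ((v : ℝ) / a) * Real.exp (-a ^ 2 / (2 * v))) := by
  have hset : {x : ℝ | a < |x|} = Set.Iio (-a) ∪ Set.Ioi a := by
    ext x
    simp only [Set.mem_setOf_eq, Set.mem_union, Set.mem_Iio, Set.mem_Ioi, lt_abs, lt_neg]
    tauto
  have hle : gaussianReal 0 v {x | a < |x|} ≤ 2 * gaussianReal 0 v (Set.Ioi a) := by
    rw [hset]
    calc gaussianReal 0 v (Set.Iio (-a) ∪ Set.Ioi a)
        ≤ gaussianReal 0 v (Set.Iio (-a)) + gaussianReal 0 v (Set.Ioi a) := measure_union_le _ _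
      _ = 2 * gaussianReal 0 v (Set.Ioi a) := by rw [aux_gauss_neg_tail hv a]; ring
  have hfin : (2 : ℝ≥0∞) * gaussianReal 0 v (Set.Ioi a) ≠ ⊤ :=
    ENNReal.mul_ne_top (by norm_num) (measure_ne_top _ _)
  calc (gaussianReal 0 v {x | a < |x|}).toReal
      ≤ ((2 : ℝ≥0∞) * gaussianReal 0 v (Set.Ioi a)).toReal := ENNReal.toReal_mono hfin hle
    _ = 2 * (gaussianReal 0 v (Set.Ioi a)).toReal := by
        rw [ENNReal.toReal_mul]; norm_num
    _ ≤ 2 * ((Real.sqrt (2 * Real.pi * v))⁻¹ * ((v : ℝ) / a) * Real.exp (-a ^ 2 / (2 * v))) := by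
        have := aux_gauss_tail_Ioi hv ha
        linarith

lemma aux_per_term (σ c : ℝ≥0) (hσ : 0 < σ) (hc : 0 < c) {L : ℝ} (hL : 0 < L) :
    (gaussianReal 0 (σ ^ 2 * c ^ 2)
        {x | Real.sqrt 2 * σ * Real.sqrt L * c < |x|}).toReal
      ≤ Real.exp (-L) / Real.sqrt (Real.pi * L) := by
  set s : ℝ := (σ : ℝ) * (c : ℝ) with hsdef
  have hs : 0 < s := by positivity
  have hv : (σ ^ 2 * c ^ 2 : ℝ≥0) ≠ 0 := by positivity
  set a : ℝ := Real.sqrt 2 * σ * Real.sqrt L * c with hadef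
  have ha : 0 < a := by
    have := Real.sqrt_pos.2 hL
    have := Real.sqrt_pos.2 (show (0:ℝ) < 2 by norm_num)
    positivity
  have hvco : ((σ ^ 2 * c ^ 2 : ℝ≥0) : ℝ) = s ^ 2 := by push_cast; ring
  have key := aux_gauss_tail_abs hv ha
  rw [hvco] at key
  refine key.trans (le_of_eq ?_)
  have hsqL : 0 < Real.sqrt L := Real.sqrt_pos.2 hL
  have hsq2 : Real.sqrt 2 * Real.sqrt 2 = 2 := Real.mul_self_sqrt (by norm_num)
  have hsqpi : 0 < Real.sqrt Real.pi := Real.sqrt_pos.2 Real.pi_pos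
  have hane : a = Real.sqrt 2 * Real.sqrt L * s := by
    rw [hadef, hsdef]; ring
  have ha2 : a ^ 2 = 2 * L * s ^ 2 := by
    have h2 : Real.sqrt 2 ^ 2 = 2 := Real.sq_sqrt (by norm_num)
    have hLs : Real.sqrt L ^ 2 = L := Real.sq_sqrt hL.le
    rw [hane, mul_pow, mul_pow, h2, hLs]
  have hexp : -a ^ 2 / (2 * s ^ 2) = -L := by
    rw [ha2]; field_simp
  have h2piv : Real.sqrt (2 * Real.pi * s ^ 2)
      = Real.sqrt 2 * Real.sqrt Real.pi * s := by
    rw [show 2 * Real.pi * s ^ 2 = 2 * (Real.pi * s ^ 2) by ring,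
      Real.sqrt_mul (by norm_num), Real.sqrt_mul Real.pi_pos.le, Real.sqrt_sq hs.le, mul_assoc]
  have hpiL : Real.sqrt (Real.pi * L) = Real.sqrt Real.pi * Real.sqrt L :=
    Real.sqrt_mul Real.pi_pos.le L
  rw [hexp, h2piv, hpiL, hane]
  field_simp
  linear_combination (-1 : ℝ) * hsq2

/-- Union bound with Gaussian tails (proof of (A.2)): if `√n · V_j ~ N(0, σ²‖f_j‖_n²)`
then the probability that some `2|V_j|` exceeds `r_{n,j} = r_n ‖f_j‖_n` with
`r_n = 2√2 σ √((log M + log n)/n)` is at most `1/(n√(π(log M + log n)))`. -/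
theorem stmt_7 {Ω : Type*} [MeasureSpace Ω] [IsProbabilityMeasure (ℙ : Measure Ω)]
    (n M : ℕ) (hn : 1 ≤ n) (hM : 2 ≤ M) (σ : ℝ≥0) (hσ : 0 < σ)
    (V : Fin M → Ω → ℝ) (hmeas : ∀ j, Measurable (V j))
    (c : Fin M → ℝ≥0) (hc : ∀ j, 0 < c j)
    (hgauss : ∀ j, Measure.map (fun ω => Real.sqrt n * V j ω) ℙ
      = gaussianReal 0 (σ ^ 2 * (c j) ^ 2)) :
    (ℙ {ω | ∃ j, (2 * Real.sqrt 2 * σ * Real.sqrt ((Real.log M + Real.log n) / n))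
          * (c j) < 2 * |V j ω|}).toReal
      ≤ 1 / (n * Real.sqrt (Real.pi * (Real.log M + Real.log n))) := by
  set L : ℝ := Real.log M + Real.log n with hLdef
  have hM1 : (1 : ℝ) < M := by exact_mod_cast lt_of_lt_of_le one_lt_two (by exact_mod_cast hM)
  have hn1 : (1 : ℝ) ≤ n := by exact_mod_cast hn
  have hn0 : (0 : ℝ) < n := lt_of_lt_of_le one_pos hn1
  have hL : 0 < L := by
    have h1 : 0 < Real.log M := Real.log_pos hM1
    have h2 : 0 ≤ Real.log n := Real.log_nonneg hn1
    rw [hLdef]; linarith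
  have hsn : 0 < Real.sqrt n := Real.sqrt_pos.2 hn0
  set A : Fin M → Set Ω := fun j =>
    {ω | (2 * Real.sqrt 2 * σ * Real.sqrt (L / n)) * (c j) < 2 * |V j ω|} with hAdef
  set a : Fin M → ℝ := fun j => Real.sqrt 2 * σ * Real.sqrt L * c j with hadef
  have hsnL : Real.sqrt n * Real.sqrt (L / n) = Real.sqrt L := by
    rw [← Real.sqrt_mul hn0.le]
    congr 1
    field_simp
  have hAj : ∀ j, A j = (fun ω => Real.sqrt n * V j ω) ⁻¹' {x | a j < |x|} := by
    intro j
    ext ω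
    simp only [hAdef, Set.mem_setOf_eq, Set.mem_preimage, hadef]
    rw [abs_mul, abs_of_nonneg hsn.le]
    constructor
    · intro h
      have h2 := (mul_lt_mul_iff_right₀ hsn).2 h
      calc Real.sqrt 2 * σ * Real.sqrt L * c j
          = Real.sqrt n * ((2 * Real.sqrt 2 * σ * Real.sqrt (L / n)) * c j) / 2 := by
            rw [show Real.sqrt n * (2 * Real.sqrt 2 * ↑σ * Real.sqrt (L / n) * ↑(c j))
              = 2 * (Real.sqrt 2 * ↑σ * (Real.sqrt n * Real.sqrt (L / n)) * ↑(c j)) by ring,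
              hsnL]
            ring
        _ < Real.sqrt n * (2 * |V j ω|) / 2 := by linarith
        _ = Real.sqrt n * |V j ω| := by ring
    · intro h
      rw [← mul_lt_mul_iff_right₀ hsn]
      calc Real.sqrt n * ((2 * Real.sqrt 2 * σ * Real.sqrt (L / n)) * c j)
          = 2 * (Real.sqrt 2 * σ * Real.sqrt L * c j) := by
            rw [show Real.sqrt n * (2 * Real.sqrt 2 * ↑σ * Real.sqrt (L / n) * ↑(c j))
              = 2 * (Real.sqrt 2 * ↑σ * (Real.sqrt n * Real.sqrt (L / n)) * ↑(c j)) by ring,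
              hsnL]
        _ < 2 * (Real.sqrt n * |V j ω|) := by linarith
        _ = Real.sqrt n * (2 * |V j ω|) := by ring
  have hSmeas : ∀ j, MeasurableSet {x : ℝ | a j < |x|} :=
    fun j => measurableSet_lt measurable_const (measurable_id.abs)
  have hPA : ∀ j, ℙ (A j) = gaussianReal 0 (σ ^ 2 * (c j) ^ 2) {x | a j < |x|} := by
    intro j
    rw [hAj j, ← Measure.map_apply ((hmeas j).const_mul _) (hSmeas j), hgauss j]
  have hexpL : Real.exp (-L) = 1 / ((M : ℝ) * n) := by
    rw [hLdef, neg_add, Real.exp_add, Real.exp_neg, Real.exp_neg,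
      Real.exp_log (by linarith : (0:ℝ) < M), Real.exp_log hn0]
    rw [one_div, mul_inv]
  have hterm : ∀ j, (ℙ (A j)).toReal ≤ 1 / ((M : ℝ) * n) / Real.sqrt (Real.pi * L) := by
    intro j
    rw [hPA j]
    have := aux_per_term σ (c j) hσ (hc j) hL
    rw [hexpL] at this
    exact this
  have hE : {ω | ∃ j, (2 * Real.sqrt 2 * σ * Real.sqrt (L / n)) * (c j) < 2 * |V j ω|}
      = ⋃ j, A j := by
    rw [hAdef, Set.setOf_exists]
  rw [hE]
  have hunion : ℙ (⋃ j, A j) ≤ ∑ j, ℙ (A j) :=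
    (measure_iUnion_le _).trans_eq (tsum_fintype _)
  have hsumfin : (∑ j, ℙ (A j)) ≠ ⊤ :=
    (ENNReal.sum_lt_top.2 fun j _ => measure_lt_top _ _).ne
  calc (ℙ (⋃ j, A j)).toReal
      ≤ (∑ j, ℙ (A j)).toReal := ENNReal.toReal_mono hsumfin hunion
    _ = ∑ j, (ℙ (A j)).toReal := ENNReal.toReal_sum fun j _ => measure_ne_top _ _
    _ ≤ ∑ _j : Fin M, 1 / ((M : ℝ) * n) / Real.sqrt (Real.pi * L) :=
        Finset.sum_le_sum fun j _ => hterm j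
    _ = 1 / (n * Real.sqrt (Real.pi * L)) := by
        rw [Finset.sum_const, Finset.card_univ, Fintype.card_fin, nsmul_eq_mul]
        have hsq : 0 < Real.sqrt (Real.pi * L) :=
          Real.sqrt_pos.2 (by positivity)
        field_simp
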